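/- Let R = K[x] and P_n the two-term complex R --x^n--> R in degrees -1, 0. For positive integers l, m, n with max(0, m-l) ≤ i < m and max(0, m-n) < j ≤ m, the composition y^j_{m,n} ∘ x^i_{l,m} in K^b(proj R) equals y^{j-i}_{l,n} if j - i > max(0, l-n), and equals 0 otherwise. -/

import Mathlib

/- Setup: `R = K[x]`, the two-term cochain complexes `P n = (R --x^n--> R)` in degrees
`-1, 0`, and the morphisms `x^i_{m,n}` and `y^i_{m,n}` in the bounded homotopy category
`K^b(proj R)` (realized inside the homotopy category of cochain complexes of
`R`-modules). -/

noncomputable section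
open CategoryTheory CategoryTheory.Limits Polynomial ZeroObject CategoryTheory.Pretriangulated

variable (K : Type) [Field K]

abbrev RMod := ModuleCat.of (Polynomial K) (Polynomial K)

/-- Multiplication by `x^a` on `R = K[x]`. -/
def mulX (a : ℕ) : RMod K ⟶ RMod K :=
  ModuleCat.ofHom (LinearMap.mulLeft (Polynomial K) ((X : Polynomial K) ^ a))

lemma mulX_comp (a b : ℕ) : mulX K a ≫ mulX K b = mulX K (a + b) := by
  dsimp [mulX, ModuleCat.ofHom]
  rw [show ((X : Polynomial K) ^ (a + b)) = X ^ b * X ^ a by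
        rw [← pow_add, add_comm],
      LinearMap.mulLeft_mul]
  rfl

/-- The graded pieces of the two-term complexes `P n`. -/
def Pobj : ℤ → ModuleCat (Polynomial K) := fun i =>
  if i = -1 ∨ i = 0 then RMod K else ModuleCat.of (Polynomial K) PUnit

lemma PobjNeg : Pobj K (-1) = RMod K := by simp [Pobj]
lemma PobjZero : Pobj K 0 = RMod K := by simp [Pobj]

/-- The differential of `P n`. -/
def Pd (n : ℕ) : ∀ i : ℤ, Pobj K i ⟶ Pobj K (i + 1) := fun i =>
  if h : i = -1 then
    eqToHom (by rw [h, PobjNeg]) ≫ mulX K n ≫ eqToHom (by rw [h]; norm_num [PobjZero])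
  else 0

/-- The two-term complex `P n = (R --x^n--> R)` in degrees `-1, 0`. -/
def P (n : ℕ) : CochainComplex (ModuleCat (Polynomial K)) ℤ :=
  CochainComplex.of (Pobj K) (Pd K n) (fun i => by
    by_cases h : i = -1
    · have h2 : Pd K n (i + 1) = 0 := dif_neg (by omega)
      rw [h2, Limits.comp_zero]
    · have h1 : Pd K n i = 0 := dif_neg h
      rw [h1, Limits.zero_comp])

lemma P_d_eq_zero (n : ℕ) (i j : ℤ) (hi : i ≠ -1) : (P K n).d i j = 0 := by
  by_cases h : i + 1 = j
  · subst h
    dsimp only [P]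
    rw [CochainComplex.of_d]
    exact dif_neg hi
  · exact HomologicalComplex.shape _ _ _ (by simpa using h)

/-- The components of the chain map which is multiplication by `x^a` in degree `-1`
and by `x^b` in degree `0`. -/
def xComp (a b : ℕ) : ∀ i : ℤ, Pobj K i ⟶ Pobj K i := fun i =>
  if h : i = -1 then eqToHom (by rw [h, PobjNeg]) ≫ mulX K a ≫ eqToHom (by rw [h, PobjNeg])
  else if h0 : i = 0 then
    eqToHom (by rw [h0, PobjZero]) ≫ mulX K b ≫ eqToHom (by rw [h0, PobjZero])
  else 0

/-- The chain map `P m ⟶ P n` which is multiplication by `x^a` in degree `-1` and by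
`x^b` in degree `0`; it commutes with the differentials since `a + n = b + m`. -/
def xMap (m n a b : ℕ) (hab : a + n = b + m) : P K m ⟶ P K n :=
  CochainComplex.ofHom (xComp K a b) (by
    intro i
    dsimp only [P]
    rw [CochainComplex.of_d, CochainComplex.of_d]
    by_cases hi : i = -1
    · subst hi
      show xComp K a b (-1) ≫ Pd K n (-1) = Pd K m (-1) ≫ xComp K a b (-1 + 1)
      rw [show xComp K a b (-1 + 1) = xComp K a b 0 from rfl]
      rw [show xComp K a b (-1) = eqToHom (PobjNeg K) ≫ mulX K a ≫ eqToHom (PobjNeg K).symm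
          from dif_pos rfl]
      rw [show xComp K a b 0 = eqToHom (PobjZero K) ≫ mulX K b ≫ eqToHom (PobjZero K).symm
          from by rw [xComp, dif_neg (by norm_num), dif_pos rfl]]
      rw [show Pd K n (-1) = eqToHom (PobjNeg K) ≫ mulX K n ≫
            eqToHom (by norm_num [PobjZero] : RMod K = Pobj K (-1 + 1))
          from dif_pos rfl]
      rw [show Pd K m (-1) = eqToHom (PobjNeg K) ≫ mulX K m ≫
            eqToHom (by norm_num [PobjZero] : RMod K = Pobj K (-1 + 1))
          from dif_pos rfl]
      simp only [Category.assoc, eqToHom_trans_assoc, eqToHom_refl, Category.id_comp]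
      try simp only [Category.comp_id]
      rw [reassoc_of% mulX_comp, reassoc_of% mulX_comp, hab, Nat.add_comm b m]
      all_goals rfl
    · have h1 : Pd K m i = 0 := dif_neg hi
      have h2 : Pd K n i = 0 := dif_neg hi
      rw [h1, h2, Limits.comp_zero, Limits.zero_comp])

/-- The components of `y^i_{m,n}`. -/
def yComp (m n a : ℕ) : ∀ i : ℤ, (P K m).X i ⟶ ((P K n)⟦(1 : ℤ)⟧).X i := fun i =>
  if h : i = -1 then
    eqToHom (by rw [h]; exact PobjNeg K) ≫ mulX K a ≫
      eqToHom (by rw [h]; show RMod K = Pobj K (-1 + 1); norm_num [PobjZero])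
  else 0

/-- The chain map `P m ⟶ (P n)⟦1⟧` whose only nonzero component is multiplication by
`x^a` in degree `-1` (landing in the degree `0` part of `P n`). -/
def yMap (m n a : ℕ) : P K m ⟶ (P K n)⟦(1 : ℤ)⟧ where
  f := yComp K m n a
  comm' := fun i j hij => by
    have hj : i + 1 = j := hij
    have hY : ∀ i' j' : ℤ, i' ≠ -2 → ((P K n)⟦(1 : ℤ)⟧).d i' j' = 0 := fun i' j' h => by
      rw [CochainComplex.shiftFunctor_obj_d',
        P_d_eq_zero K n _ _ (by change i' + 1 ≠ -1; omega), smul_zero]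
      rfl
    by_cases hi : i = -1
    · rw [hY i j (by omega), Limits.comp_zero,
        show yComp K m n a j = 0 from dif_neg (by omega), Limits.comp_zero]
    · rw [show yComp K m n a i = 0 from dif_neg hi, Limits.zero_comp]
      by_cases hj' : j = -1
      · rw [P_d_eq_zero K m i j hi, Limits.zero_comp]
      · rw [show yComp K m n a j = 0 from dif_neg hj', Limits.comp_zero]

/-- The homotopy category of cochain complexes of `K[x]`-modules, in which the bounded
homotopy category of finitely generated projectives embeds fully faithfully. -/
abbrev KbT := HomotopyCategory (ModuleCat (Polynomial K)) (ComplexShape.up ℤ)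

abbrev Q : CochainComplex (ModuleCat (Polynomial K)) ℤ ⥤ KbT K :=
  HomotopyCategory.quotient _ _

/-- `P n` as an object of the homotopy category. -/
abbrev Pbar (n : ℕ) : KbT K := (Q K).obj (P K n)

/-- The morphism `x^i_{m,n} : P m ⟶ P n` in the homotopy category, defined for
`max (0, n - m) ≤ i` (expressed with truncated subtraction on `ℕ`); in degree `-1` it is
multiplication by `x^(i+m-n)` and in degree `0` multiplication by `x^i`. -/
def xbar (m n i : ℕ) (h : n - m ≤ i) : Pbar K m ⟶ Pbar K n :=
  (Q K).map (xMap K m n (i + m - n) i (by omega))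

/-- The identification `Q(P n ⟦1⟧) ≅ (Q (P n))⟦1⟧` in the homotopy category. -/
def shIso (n : ℕ) : (Q K).obj ((P K n)⟦(1 : ℤ)⟧) ≅ (Pbar K n)⟦(1 : ℤ)⟧ :=
  ((Q K).commShiftIso (1 : ℤ)).app (P K n)

/-- The morphism `y^i_{m,n} : P m ⟶ (P n)[1]` in the homotopy category, defined for
`i ≤ m`; its only nonzero component is multiplication by `x^(m-i)` in degree `-1`. -/
def ybar (m n i : ℕ) (_h : i ≤ m) : Pbar K m ⟶ (Pbar K n)⟦(1 : ℤ)⟧ :=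
  (Q K).map (yMap K m n (m - i)) ≫ (shIso K n).hom


lemma PX_neg (n : ℕ) : (P K n).X (-1) = RMod K := PobjNeg K
lemma PX_zero (n : ℕ) : (P K n).X 0 = RMod K := PobjZero K
lemma SX_neg (n : ℕ) : ((P K n)⟦(1 : ℤ)⟧).X (-1) = RMod K := PobjZero K
lemma SX_neg2 (n : ℕ) : ((P K n)⟦(1 : ℤ)⟧).X (-2) = RMod K := PobjNeg K

lemma P_d_neg_one (n : ℕ) : (P K n).d (-1) 0 =
    eqToHom (PX_neg K n) ≫ mulX K n ≫
      eqToHom (PX_zero K n).symm := by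
  have h : (P K n).d (-1) 0 = Pd K n (-1) := CochainComplex.of_d (X := Pobj K) (d := Pd K n) (-1)
  rw [h, Pd, dif_pos rfl]
  rfl

lemma Sd_neg2 (n : ℕ) : ((P K n)⟦(1 : ℤ)⟧).d (-2) (-1) =
    -(eqToHom (SX_neg2 K n) ≫ mulX K n ≫ eqToHom (SX_neg K n).symm) := by
  have hd : ((P K n)⟦(1 : ℤ)⟧).d (-2) (-1) = (1 : ℤ).negOnePow • (P K n).d (-1) 0 := rfl
  rw [hd, Int.negOnePow_one, P_d_neg_one, Units.neg_smul, one_smul]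
  rfl

lemma Sd_neg1 (n : ℕ) : ((P K n)⟦(1 : ℤ)⟧).d (-1) 0 = 0 := by
  have hd : ((P K n)⟦(1 : ℤ)⟧).d (-1) 0 = (1 : ℤ).negOnePow • (P K n).d 0 1 := rfl
  rw [hd, P_d_eq_zero K n 0 1 (by decide), smul_zero]
  rfl

lemma xMap_f_neg (m n a b : ℕ) (hab : a + n = b + m) : (xMap K m n a b hab).f (-1) =
    eqToHom (PX_neg K m) ≫ mulX K a ≫
      eqToHom (PX_neg K n).symm := by
  rw [show (xMap K m n a b hab).f (-1) = xComp K a b (-1) from rfl, xComp, dif_pos rfl]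
  rfl

lemma yMap_f_neg (m n c : ℕ) : (yMap K m n c).f (-1) =
    eqToHom (PX_neg K m) ≫ mulX K c ≫
      eqToHom (SX_neg K n).symm := by
  rw [show (yMap K m n c).f (-1) = yComp K m n c (-1) from rfl, yComp, dif_pos rfl]

lemma yMap_f_ne (m n c : ℕ) (i : ℤ) (hi : i ≠ -1) : (yMap K m n c).f i = 0 := dif_neg hi

lemma xMap_comp_yMap (l m n a b c : ℕ) (hab : a + m = b + l) :
    xMap K l m a b hab ≫ yMap K m n c = yMap K l n (a + c) := by
  apply HomologicalComplex.hom_ext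
  intro i
  rw [HomologicalComplex.comp_f]
  by_cases hi : i = -1
  · subst hi
    rw [xMap_f_neg, yMap_f_neg, yMap_f_neg]
    simp only [Category.assoc, eqToHom_trans_assoc, eqToHom_refl, Category.id_comp,
      Category.comp_id, mulX_comp]
    rw [← Category.assoc (mulX K a), mulX_comp]
  · rw [yMap_f_ne K m n c i hi, yMap_f_ne K l n (a + c) i hi, Limits.comp_zero]

/-- The candidate nullhomotopy of `yMap K l n a`, nonzero only from degree `-1` to
degree `-2`. -/
def hA (l n a : ℕ) : ∀ p q : ℤ, (P K l).X p ⟶ ((P K n)⟦(1 : ℤ)⟧).X q := fun p q =>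
  if hpq : p = -1 ∧ q = -2 then
    -(eqToHom (show (P K l).X p = RMod K by rw [hpq.1]; exact PobjNeg K) ≫
      mulX K (a - n) ≫
      eqToHom (show RMod K = ((P K n)⟦(1 : ℤ)⟧).X q by rw [hpq.2]; exact (PobjNeg K).symm))
  else 0

lemma hA_val (l n a : ℕ) : hA K l n a (-1) (-2) =
    -(eqToHom (PX_neg K l) ≫ mulX K (a - n) ≫
      eqToHom (SX_neg2 K n).symm) :=
  dif_pos ⟨rfl, rfl⟩

lemma hA_zero (l n a : ℕ) (p q : ℤ) (h : ¬(p = -1 ∧ q = -2)) : hA K l n a p q = 0 :=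
  dif_neg h

/-- Nullhomotopy of `yMap K l n a` when `n ≤ a`. -/
def homotopyA (l n a : ℕ) (h : n ≤ a) : Homotopy (yMap K l n a) 0 where
  hom := hA K l n a
  zero := fun p q hpq => hA_zero K l n a p q (by rintro ⟨rfl, rfl⟩; exact hpq (by decide))
  comm := fun i => by
    by_cases hi : i = -1
    · subst hi
      rw [dNext_eq _ (show (ComplexShape.up ℤ).Rel (-1) 0 by decide),
        prevD_eq _ (show (ComplexShape.up ℤ).Rel (-2) (-1) by decide),
        hA_zero K l n a 0 (-1) (by omega), Limits.comp_zero, hA_val]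
      rw [yMap_f_neg, zero_add, HomologicalComplex.zero_f, add_zero]
      rw [Sd_neg2]
      simp only [Units.neg_smul, one_smul, Preadditive.comp_neg, Preadditive.neg_comp,
        neg_neg, Category.assoc, eqToHom_trans_assoc, eqToHom_refl, Category.id_comp,
        mulX_comp]
      rw [← Category.assoc (mulX K (a - n)), mulX_comp, Nat.sub_add_cancel h]
    · rw [show (yMap K l n a).f i = 0 from dif_neg hi,
        prevD_eq _ (show i - 1 + 1 = i by omega),
        hA_zero K l n a i (i - 1) (fun hc => hi hc.1), Limits.zero_comp,
        dNext_eq _ (show (ComplexShape.up ℤ).Rel i (i + 1) from rfl)]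
      by_cases hi2 : i = -2
      · subst hi2
        rw [P_d_eq_zero K l _ _ (by decide), Limits.zero_comp]
        simp only [HomologicalComplex.zero_f, add_zero]
      · rw [hA_zero K l n a (i + 1) i (fun hc => hi2 hc.2), Limits.comp_zero]
        simp only [HomologicalComplex.zero_f, add_zero]


/-- The candidate nullhomotopy of `yMap K l n a`, nonzero only from degree `0` to
degree `-1`. -/
def hB (l n a : ℕ) : ∀ p q : ℤ, (P K l).X p ⟶ ((P K n)⟦(1 : ℤ)⟧).X q := fun p q =>
  if hpq : p = 0 ∧ q = -1 then
    eqToHom (show (P K l).X p = RMod K by rw [hpq.1]; exact PobjZero K) ≫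
      mulX K (a - l) ≫
      eqToHom (show RMod K = ((P K n)⟦(1 : ℤ)⟧).X q by rw [hpq.2]; exact (PobjZero K).symm)
  else 0

lemma hB_val (l n a : ℕ) : hB K l n a 0 (-1) =
    eqToHom (PX_zero K l) ≫ mulX K (a - l) ≫
      eqToHom (SX_neg K n).symm :=
  dif_pos ⟨rfl, rfl⟩

lemma hB_zero (l n a : ℕ) (p q : ℤ) (h : ¬(p = 0 ∧ q = -1)) : hB K l n a p q = 0 :=
  dif_neg h

/-- Nullhomotopy of `yMap K l n a` when `l ≤ a`. -/
def homotopyB (l n a : ℕ) (h : l ≤ a) : Homotopy (yMap K l n a) 0 where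
  hom := hB K l n a
  zero := fun p q hpq => hB_zero K l n a p q (by rintro ⟨rfl, rfl⟩; exact hpq (by decide))
  comm := fun i => by
    by_cases hi : i = -1
    · subst hi
      rw [dNext_eq _ (show (ComplexShape.up ℤ).Rel (-1) 0 by decide),
        prevD_eq _ (show (-2 : ℤ) + 1 = -1 by decide),
        hB_zero K l n a (-1) (-2) (by omega), Limits.zero_comp, hB_val, P_d_neg_one]
      rw [yMap_f_neg, HomologicalComplex.zero_f, add_zero, add_zero]
      simp only [Category.assoc, eqToHom_trans_assoc, eqToHom_refl, Category.id_comp]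
      rw [← Category.assoc (mulX K l), mulX_comp, Nat.add_sub_cancel' h]
    · rw [show (yMap K l n a).f i = 0 from dif_neg hi,
        dNext_eq _ (show (ComplexShape.up ℤ).Rel i (i + 1) from rfl),
        prevD_eq _ (show i - 1 + 1 = i by omega)]
      by_cases hi0 : i = 0
      · subst hi0
        rw [P_d_eq_zero K l _ _ (by decide), Limits.zero_comp,
          show ((0 : ℤ) - 1) = -1 by decide, hB_val]
        rw [Sd_neg1, Limits.comp_zero]
        simp only [HomologicalComplex.zero_f, add_zero]
      · rw [hB_zero K l n a (i + 1) i (fun hc => hi hc.2), Limits.comp_zero,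
          hB_zero K l n a i (i - 1) (fun hc => hi0 hc.1), Limits.zero_comp]
        simp only [HomologicalComplex.zero_f, add_zero]

lemma Qmap_yMap_eq_zero (l n a : ℕ) (h : n ≤ a ∨ l ≤ a) :
    (Q K).map (yMap K l n a) = 0 := by
  have : (Q K).map (yMap K l n a) = (Q K).map 0 := by
    cases h with
    | inl h => exact HomotopyCategory.eq_of_homotopy _ _ (homotopyA K l n a h)
    | inr h => exact HomotopyCategory.eq_of_homotopy _ _ (homotopyB K l n a h)
  rw [this, Functor.map_zero]


/-- for positive `l, m, n` with `max (0, m-l) ≤ i < m` and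
`max (0, m-n) < j ≤ m`, the composition `y^j_{m,n} ∘ x^i_{l,m}` equals `y^(j-i)_{l,n}`
if `j - i > max (0, l-n)`, and `0` otherwise. -/
theorem ybar_comp_xbar (l m n : ℕ) (hl : 0 < l) (hm : 0 < m) (hn : 0 < n)
    (i j : ℕ) (hi : m - l ≤ i) (him : i < m) (hjn : m - n < j) (hj : j ≤ m) :
    xbar K l m i hi ≫ ybar K m n j hj =
      if i < j ∧ l - n < j - i then ybar K l n (j - i) (by omega) else 0 := by
  rw [xbar, ybar, ← Category.assoc, ← Functor.map_comp, xMap_comp_yMap]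
  split_ifs with hc
  · rw [ybar, show i + l - m + (m - j) = l - (j - i) by omega]
  · rw [Qmap_yMap_eq_zero K l n _ (by omega), Limits.zero_comp]
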